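/- The set Z of infinite paths is dense in X = Y_∞ ∪ Z (with the subspace topology from Y ∪ Z). -/
import Mathlib


namespace GraphCstar

/-- A directed graph: vertices, edges, source and range maps. -/
structure Graph where
  V : Type
  Ed : Type
  src : Ed → V
  rng : Ed → V

variable (G : Graph)

/-- Validity of a list of edges as a path starting at vertex `v`. -/
def Valid : G.V → List G.Ed → Prop
  | _, [] => True
  | v, e :: l => G.src e = v ∧ Valid (G.rng e) l

/-- Terminal vertex of a list of edges starting at `v`. -/
def rngTo : G.V → List G.Ed → G.V
  | v, [] => v
  | _, e :: l => rngTo (G.rng e) l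

theorem valid_append (l₁ l₂ : List G.Ed) (v : G.V) :
    Valid G v (l₁ ++ l₂) ↔ Valid G v l₁ ∧ Valid G (rngTo G v l₁) l₂ := by
  induction l₁ generalizing v with
  | nil => simp [Valid, rngTo]
  | cons e l ih => simp [Valid, rngTo, ih, and_assoc]

theorem rngTo_append (l₁ l₂ : List G.Ed) (v : G.V) :
    rngTo G v (l₁ ++ l₂) = rngTo G (rngTo G v l₁) l₂ := by
  induction l₁ generalizing v with
  | nil => rfl
  | cons e l ih => simp [rngTo, ih]

theorem valid_drop {v : G.V} {l : List G.Ed} (n : ℕ) (h : Valid G v l) :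
    Valid G (rngTo G v (l.take n)) (l.drop n) := by
  have h' : Valid G v (l.take n ++ l.drop n) := by
    rw [List.take_append_drop]; exact h
  exact ((valid_append G _ _ _).mp h').2

/-- A finite path in the graph `G`; vertices are the paths of length `0`. -/
structure FinPath where
  start : G.V
  edges : List G.Ed
  valid : Valid G start edges

namespace FinPath

variable {G}

/-- The terminal vertex (range) of a finite path. -/
def rngF (α : FinPath G) : G.V := rngTo G α.start α.edges

/-- The length of a finite path. -/
def len (α : FinPath G) : ℕ := α.edges.length

/-- The finite path of length `0` at the vertex `v`. -/
def vp (v : G.V) : FinPath G := ⟨v, [], trivial⟩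

/-- The finite path consisting of the single edge `e`. -/
def ep (e : G.Ed) : FinPath G := ⟨G.src e, [e], ⟨rfl, trivial⟩⟩

/-- Concatenation of finite paths. -/
def concat (α β : FinPath G) (h : β.start = α.rngF) : FinPath G :=
  ⟨α.start, α.edges ++ β.edges,
    (valid_append G _ _ _).mpr
      ⟨α.valid, by
        show Valid G α.rngF β.edges
        rw [← h]; exact β.valid⟩⟩

theorem rngF_concat (α β : FinPath G) (h : β.start = α.rngF) :
    (α.concat β h).rngF = β.rngF := by
  show rngTo G α.start (α.edges ++ β.edges) = _
  rw [rngTo_append]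
  show rngTo G α.rngF β.edges = _
  rw [← h]; rfl

end FinPath

/-- `α` is an initial segment of `β`. -/
def IsPref (α β : FinPath G) : Prop := α.start = β.start ∧ α.edges <+: β.edges

/-- The "remainder" path: if `α` is an initial segment of `β`, the path `μ` with
`β = αμ` (for other inputs the value is junk). -/
def diff (α β : FinPath G) : FinPath G :=
  ⟨rngTo G β.start (β.edges.take α.edges.length),
    β.edges.drop α.edges.length, valid_drop G _ β.valid⟩

open Classical in
/-- Totalized concatenation of finite paths (junk value when endpoints do not match). -/
noncomputable def catP (α β : FinPath G) : FinPath G :=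
  if h : β.start = α.rngF then α.concat β h else α

open Classical in
/-- The product on `T = {(α,β) ∈ Y × Y : r(α) = r(β)} ∪ {z}`, with `z` encoded as `none`. -/
noncomputable def mulT :
    Option (FinPath G × FinPath G) → Option (FinPath G × FinPath G) →
      Option (FinPath G × FinPath G)
  | none, _ => none
  | _, none => none
  | some (α₁, β₁), some (α₂, β₂) =>
    if IsPref G β₁ α₂ then some (catP G α₁ (diff G β₁ α₂), β₂)
    else if IsPref G α₂ β₁ then some (α₁, catP G β₂ (diff G α₂ β₁))
    else none

/-- The involution on `T`. -/
def starT :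
    Option (FinPath G × FinPath G) → Option (FinPath G × FinPath G)
  | none => none
  | some (α, β) => some (β, α)

/-- The subset of `Option (FinPath G × FinPath G)` corresponding to
`T = {(α,β) : r(α) = r(β)} ∪ {z}`. -/
def TsetT : Set (Option (FinPath G × FinPath G)) :=
  {t | ∀ α β : FinPath G, t = some (α, β) → α.rngF = β.rngF}

/-- An infinite path in the graph `G`. -/
structure InfPath where
  seq : ℕ → G.Ed
  valid : ∀ i, G.src (seq (i + 1)) = G.rng (seq i)

/-- The initial vertex of an infinite path. -/
def InfPath.start {G : Graph} (z : InfPath G) : G.V := G.src (z.seq 0)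

/-- Prepending an edge to an infinite path. -/
def consInf (e : G.Ed) (z : InfPath G) (h : z.start = G.rng e) : InfPath G where
  seq := fun n =>
    match n with
    | 0 => e
    | m + 1 => z.seq m
  valid := fun i =>
    match i with
    | 0 => h
    | m + 1 => z.valid m

/-- Prepending a finite edge list to an infinite path (with the starting vertex recorded). -/
def appendInfAux :
    (l : List G.Ed) → (v : G.V) → Valid G v l → (z : InfPath G) →
      z.start = rngTo G v l → {w : InfPath G // w.start = v}
  | [], _, _, z, h => ⟨z, h⟩
  | e :: l, v, hv, z, h =>
    let w := appendInfAux l (G.rng e) hv.2 z h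
    ⟨consInf G e w.1 w.2, hv.1⟩

/-- Concatenation of a finite path with an infinite path. -/
def FinPath.concatInf {G : Graph} (α : FinPath G) (z : InfPath G)
    (h : z.start = α.rngF) : InfPath G :=
  (appendInfAux G α.edges α.start α.valid z h).1

/-- The path space `Y ∪ Z` of all finite and infinite paths. -/
def PathSp := FinPath G ⊕ InfPath G

/-- The initial vertex of a (finite or infinite) path. -/
def startOf : PathSp G → G.V
  | .inl α => α.start
  | .inr z => z.start

/-- The length of a path, in `ℕ∞`. -/
def lenOf : PathSp G → ℕ∞
  | .inl α => (α.edges.length : ℕ∞)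
  | .inr _ => ⊤

/-- The `i`-th edge (0-indexed) of a path, if it exists. -/
def nthEdge : PathSp G → ℕ → Option G.Ed
  | .inl α, i => α.edges[i]?
  | .inr z, i => some (z.seq i)

/-- `x = αγ` for some (finite or infinite, possibly length `0`) path `γ`;
that is, `α` is an initial segment of `x`, i.e. `x ∈ D_α`. -/
def Ext (α : FinPath G) (x : PathSp G) : Prop :=
  (∃ (β : FinPath G) (h : β.start = α.rngF), x = .inl (α.concat β h)) ∨
  (∃ (w : InfPath G) (h : w.start = α.rngF), x = .inr (α.concatInf w h))

/-- The basic set `D_α ⊆ Y ∪ Z`. -/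
def Dset (α : FinPath G) : Set (PathSp G) := {x | Ext G α x}

/-- The topology on the path space, generated by the sets `D_α` and their complements. -/
def pathTop : TopologicalSpace (PathSp G) :=
  .generateFrom (Set.range (Dset G) ∪ Set.range fun α => (Dset G α)ᶜ)

/-- The vertex `v` emits infinitely many edges. -/
def Vinf (v : G.V) : Prop := {e | G.src e = v}.Infinite

/-- Membership in `X = Y_∞ ∪ Z`. -/
def memX : PathSp G → Prop
  | .inl α => Vinf G α.rngF
  | .inr _ => True

/-- The set `X = Y_∞ ∪ Z`. -/
def Xset : Set (PathSp G) := {x | memX G x}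

/-- Tail equivalence of paths: `x = αγ` and `y = βγ` for finite paths `α, β`
and a common (finite or infinite) path `γ`. -/
def TailEq (x y : PathSp G) : Prop :=
  (∃ (α β γ : FinPath G) (h₁ : γ.start = α.rngF) (h₂ : γ.start = β.rngF),
      x = .inl (α.concat γ h₁) ∧ y = .inl (β.concat γ h₂)) ∨
  (∃ (α β : FinPath G) (w : InfPath G) (h₁ : w.start = α.rngF)
      (h₂ : w.start = β.rngF),
      x = .inr (α.concatInf w h₁) ∧ y = .inr (β.concatInf w h₂))

/-- A subset of the path space is invariant (a union of tail-equivalence classes). -/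
def InvariantS (F : Set (PathSp G)) : Prop :=
  ∀ x ∈ F, ∀ y, TailEq G x y → y ∈ F

/-- Membership `(x, k, y) ∈ G` for the path groupoid: `x = αγ`, `y = βγ` and
`k = l(α) - l(β)`. -/
def InG (x : PathSp G) (k : ℤ) (y : PathSp G) : Prop :=
  (∃ (α β γ : FinPath G) (h₁ : γ.start = α.rngF) (h₂ : γ.start = β.rngF),
      x = .inl (α.concat γ h₁) ∧ y = .inl (β.concat γ h₂) ∧
        k = (α.len : ℤ) - (β.len : ℤ)) ∨
  (∃ (α β : FinPath G) (w : InfPath G) (h₁ : w.start = α.rngF)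
      (h₂ : w.start = β.rngF),
      x = .inr (α.concatInf w h₁) ∧ y = .inr (β.concatInf w h₂) ∧
        k = (α.len : ℤ) - (β.len : ℤ))

/-- There is a finite path from `u` to `w`. -/
def Reach (u w : G.V) : Prop := ∃ β : FinPath G, β.start = u ∧ β.rngF = w

/-- A loop based at the vertex `v`. -/
def LoopAt (v : G.V) (α : FinPath G) : Prop :=
  α.edges ≠ [] ∧ α.start = v ∧ α.rngF = v ∧
    ∀ i e, i + 1 < α.edges.length → α.edges[i]? = some e → G.rng e ≠ v

/-- Condition (K): no vertex has exactly one loop based at it. -/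
def CondK : Prop := ¬ ∃ v : G.V, ∃! α : FinPath G, LoopAt G v α

/-- A point of the path space has trivial isotropy if whenever `x = αγ = βγ`
then `l(α) = l(β)`. -/
def TrivIso (x : PathSp G) : Prop :=
  ∀ α β : FinPath G,
    ((∃ (γ : FinPath G) (h₁ : γ.start = α.rngF) (h₂ : γ.start = β.rngF),
        x = .inl (α.concat γ h₁) ∧ x = .inl (β.concat γ h₂)) ∨
     (∃ (w : InfPath G) (h₁ : w.start = α.rngF) (h₂ : w.start = β.rngF),
        x = .inr (α.concatInf w h₁) ∧ x = .inr (β.concatInf w h₂))) →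
    α.len = β.len


/-! ### Auxiliary lemmas for the density theorem -/

section Aux

variable {G}

lemma InfPath.ext' {z w : InfPath G} (h : ∀ n, z.seq n = w.seq n) : z = w := by
  cases z; cases w
  simp only [InfPath.mk.injEq]
  exact funext h

lemma FinPath.ext' {x y : FinPath G} (hs : x.start = y.start)
    (he : x.edges = y.edges) : x = y := by
  cases x; cases y
  dsimp at hs he
  subst hs; subst he; rfl

/-- Dropping the first `n` edges of an infinite path. -/
def dropInf (n : ℕ) (z : InfPath G) : InfPath G :=
  ⟨fun i => z.seq (n + i), fun i => z.valid (n + i)⟩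

lemma appendInfAux_seq (l : List G.Ed) (v : G.V) (hv : Valid G v l) (z : InfPath G)
    (h : z.start = rngTo G v l) (n : ℕ) :
    ((appendInfAux G l v hv z h).1).seq n =
      if hn : n < l.length then l[n]'hn else z.seq (n - l.length) := by
  induction l generalizing v n with
  | nil => simp [appendInfAux]
  | cons e l ih =>
    cases n with
    | zero => simp [appendInfAux, consInf]
    | succ m =>
      have := ih (G.rng e) hv.2 h m
      simp only [appendInfAux, consInf] at *
      rw [this]
      by_cases hm : m < l.length
      · rw [dif_pos hm, dif_pos (by simpa using Nat.succ_lt_succ hm)]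
        simp
      · rw [dif_neg hm, dif_neg (by simpa using fun h' => hm (Nat.lt_of_succ_lt_succ h'))]
        simp [Nat.succ_sub_succ]

lemma concatInf_seq (α : FinPath G) (w : InfPath G) (h : w.start = α.rngF) (n : ℕ) :
    (α.concatInf w h).seq n =
      if hn : n < α.edges.length then α.edges[n]'hn else w.seq (n - α.edges.length) :=
  appendInfAux_seq α.edges α.start α.valid w h n

lemma concatInf_start (α : FinPath G) (w : InfPath G) (h : w.start = α.rngF) :
    (α.concatInf w h).start = α.start :=
  (appendInfAux G α.edges α.start α.valid w h).2

lemma src_seq_rngTo (l : List G.Ed) (v : G.V) (hv : Valid G v l) (z : InfPath G)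
    (h0 : z.start = v) (hseq : ∀ i (hi : i < l.length), z.seq i = l[i]'hi) :
    G.src (z.seq l.length) = rngTo G v l := by
  induction l generalizing v z with
  | nil => exact h0
  | cons e l ih =>
    have h00 : z.seq 0 = e := hseq 0 (by simp)
    have key : G.src ((dropInf 1 z).seq l.length) = rngTo G (G.rng e) l := by
      apply ih (G.rng e) hv.2 (dropInf 1 z)
      · show G.src (z.seq (1 + 0)) = G.rng e
        rw [← h00]
        exact z.valid 0
      · intro i hi
        show z.seq (1 + i) = l[i]'hi
        have := hseq (i + 1) (by simpa using Nat.succ_lt_succ hi)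
        rw [Nat.add_comm]
        simpa using this
    have : (dropInf 1 z).seq l.length = z.seq (l.length + 1) := by
      show z.seq (1 + l.length) = z.seq (l.length + 1)
      rw [Nat.add_comm]
    rw [this] at key
    exact key

lemma ext_inr_iff (α : FinPath G) (z : InfPath G) :
    Ext G α (.inr z) ↔
      z.start = α.start ∧ ∀ i (hi : i < α.edges.length), z.seq i = α.edges[i]'hi := by
  constructor
  · rintro (⟨β, h, hz⟩ | ⟨w, h, hz⟩)
    · exact absurd hz (by simp)
    · have hz' : z = α.concatInf w h := by
        injection hz
      subst hz'
      refine ⟨concatInf_start α w h, fun i hi => ?_⟩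
      rw [concatInf_seq, dif_pos hi]
  · rintro ⟨h0, hseq⟩
    have hsrc : (dropInf α.edges.length z).start = α.rngF := by
      show G.src (z.seq (α.edges.length + 0)) = α.rngF
      exact src_seq_rngTo α.edges α.start α.valid z h0 hseq
    refine Or.inr ⟨dropInf α.edges.length z, hsrc, ?_⟩
    have : z = α.concatInf (dropInf α.edges.length z) hsrc := by
      apply InfPath.ext'
      intro n
      rw [concatInf_seq]
      by_cases hn : n < α.edges.length
      · rw [dif_pos hn]; exact hseq n hn
      · rw [dif_neg hn]
        show z.seq n = z.seq (α.edges.length + (n - α.edges.length))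
        rw [Nat.add_sub_cancel' (Nat.le_of_not_lt hn)]
    rw [← this]

lemma ext_inl_iff (α δ : FinPath G) :
    Ext G α (.inl δ) ↔ α.start = δ.start ∧ α.edges <+: δ.edges := by
  constructor
  · rintro (⟨β, h, hδ⟩ | ⟨w, h, hδ⟩)
    · have hδ' : δ = α.concat β h := by injection hδ
      subst hδ'
      exact ⟨rfl, ⟨β.edges, rfl⟩⟩
    · exact absurd hδ (by simp)
  · rintro ⟨h0, t, ht⟩
    have hv : Valid G α.rngF t := by
      have hδv : Valid G α.start (α.edges ++ t) := by
        rw [h0, ht]; exact δ.valid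
      exact ((valid_append G _ _ _).mp hδv).2
    refine Or.inl ⟨⟨α.rngF, t, hv⟩, rfl, ?_⟩
    have : δ = α.concat ⟨α.rngF, t, hv⟩ rfl :=
      FinPath.ext' h0.symm ht.symm
    rw [this]

/-- A choice of infinite-path tail from any vertex, using `hns`. -/
noncomputable def seqFrom (hns : ∀ v : G.V, ∃ e : G.Ed, G.src e = v) (v : G.V) :
    ℕ → G.Ed
  | 0 => (hns v).choose
  | n + 1 => (hns (G.rng (seqFrom hns v n))).choose

noncomputable def infFrom (hns : ∀ v : G.V, ∃ e : G.Ed, G.src e = v) (v : G.V) :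
    InfPath G :=
  ⟨seqFrom hns v, fun i => by
    show G.src (seqFrom hns v (i + 1)) = _
    rw [seqFrom]
    exact (hns _).choose_spec⟩

lemma infFrom_start (hns : ∀ v : G.V, ∃ e : G.Ed, G.src e = v) (v : G.V) :
    (infFrom hns v).start = v := by
  show G.src (seqFrom hns v 0) = v
  rw [seqFrom]
  exact (hns v).choose_spec

end Aux

/-- The set `Z` of infinite paths is dense in `X = Y_∞ ∪ Z`
(with the subspace topology from `Y ∪ Z`). -/
theorem infinite_paths_dense (G : Graph) [Countable G.V] [Countable G.Ed]
    (hns : ∀ v : G.V, ∃ e : G.Ed, G.src e = v) :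
    Xset G ⊆ @closure (PathSp G) (pathTop G)
      (Set.range (Sum.inr : InfPath G → PathSp G)) := by
  classical
  letI : TopologicalSpace (PathSp G) := pathTop G
  have hbasis : TopologicalSpace.IsTopologicalBasis
      ((fun f => Set.sInter f) ''
        {f : Set (Set (PathSp G)) | f.Finite ∧
          f ⊆ Set.range (Dset G) ∪ Set.range fun α => (Dset G α)ᶜ}) :=
    TopologicalSpace.isTopologicalBasis_of_subbasis rfl
  intro x hx
  rw [hbasis.mem_closure_iff]
  rintro o ⟨f, ⟨hf_fin, hf_sub⟩, rfl⟩ hxo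
  cases x with
  | inr z => exact ⟨.inr z, hxo, z, rfl⟩
  | inl δ =>
    have hVinf : Vinf G δ.rngF := hx
    -- the representative function for complement-type generators
    let g : Set (PathSp G) → Option G.Ed := fun s =>
      if h : ∃ β : FinPath G, s = (Dset G β)ᶜ then
        h.choose.edges[δ.edges.length]? else none
    have hFb : (Option.some ⁻¹' (g '' f)).Finite :=
      (hf_fin.image g).preimage (Option.some_injective _).injOn
    obtain ⟨e, he⟩ := (hVinf.diff hFb).nonempty
    have hse : (FinPath.ep e : FinPath G).start = δ.rngF := he.1
    set δ' : FinPath G := δ.concat (FinPath.ep e) hse with hδ'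
    have hδ'edges : δ'.edges = δ.edges ++ [e] := rfl
    set w := infFrom hns (G.rng e) with hw
    have hwst : w.start = δ'.rngF := by
      rw [hδ', FinPath.rngF_concat]
      exact infFrom_start hns (G.rng e)
    set z := δ'.concatInf w hwst with hz
    have hzstart : z.start = δ.start := concatInf_start δ' w hwst
    have hzseq : ∀ i (hi : i < δ.edges.length + 1),
        z.seq i = (δ.edges ++ [e])[i]'(by simpa using hi) := by
      intro i hi
      rw [hz, concatInf_seq, dif_pos (by rw [hδ'edges]; simpa using hi)]
      rfl
    have hze : z.seq δ.edges.length = e := by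
      have := hzseq δ.edges.length (by omega)
      rw [this]
      simp
    refine ⟨.inr z, ?_, z, rfl⟩
    intro s hs
    have hxs : Sum.inl δ ∈ s := hxo s hs
    by_cases hα : ∃ α, s = Dset G α
    · obtain ⟨α, rfl⟩ := hα
      have hext : Ext G α (.inl δ) := hxs
      rw [ext_inl_iff] at hext
      obtain ⟨h0, hpre⟩ := hext
      have hlen : α.edges.length ≤ δ.edges.length := hpre.length_le
      show Ext G α (.inr z)
      rw [ext_inr_iff]
      refine ⟨hzstart.trans h0.symm, fun i hi => ?_⟩
      have h1 := hzseq i (by omega)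
      rw [h1]
      have h2 : (δ.edges ++ [e])[i]'(by simp; omega) = δ.edges[i]'(by omega) :=
        List.getElem_append_left (by omega)
      rw [h2]
      exact (hpre.getElem hi).symm
    · have hβ : ∃ β : FinPath G, s = (Dset G β)ᶜ := by
        rcases hf_sub hs with ⟨α, rfl⟩ | ⟨β, hb⟩
        · exact absurd ⟨α, rfl⟩ hα
        · exact ⟨β, hb.symm⟩
      have hsβ : s = (Dset G hβ.choose)ᶜ := hβ.choose_spec
      set β := hβ.choose with hβdef
      have hxβ : ¬ Ext G β (.inl δ) := by
        rw [hsβ] at hxs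
        exact hxs
      rw [hsβ]
      intro hcon
      have hext : Ext G β (.inr z) := hcon
      rw [ext_inr_iff] at hext
      obtain ⟨h0, hseq⟩ := hext
      rcases le_or_gt β.edges.length δ.edges.length with hle | hgt
      · apply hxβ
        rw [ext_inl_iff]
        refine ⟨h0.symm.trans hzstart, ?_⟩
        rw [List.prefix_iff_eq_take]
        apply List.ext_getElem
        · simp [hle]
        · intro i hi1 hi2
          have hiβ : i < β.edges.length := hi1
          have hiδ : i < δ.edges.length := by omega
          have h1 := hseq i hiβ
          have h2 := hzseq i (by omega)
          rw [h2] at h1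
          rw [List.getElem_take, ← h1]
          exact List.getElem_append_left (by omega)
      · -- β is longer: its edge at position `δ.len` equals `e`, contradiction
        have hfe : β.edges[δ.edges.length]? = some e := by
          rw [List.getElem?_eq_getElem hgt]
          have h1 := hseq δ.edges.length hgt
          rw [hze] at h1
          rw [← h1]
        have hgs : g s = some e := by
          show (if h : ∃ β : FinPath G, s = (Dset G β)ᶜ then
            h.choose.edges[δ.edges.length]? else none) = some e
          rw [dif_pos hβ]
          exact hfe
        exact he.2 ⟨s, hs, hgs⟩

end GraphCstar
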